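/- Let A be an N×N real matrix with diagonal entries 2, off-diagonal entries ≤ 0, cyclically adjacent off-diagonal entries strictly negative, and all row sums zero. Then the only vector with all nonnegative entries in the range of A is the zero vector; consequently, the one-dimensional kernel of the transpose Aᵀ is spanned by a vector all of whose entries are strictly positive (or all strictly negative). -/

import Mathlib

lemma stmt16_const (N : ℕ) (hN : 2 ≤ N) (A : Matrix (Fin N) (Fin N) ℝ)
    (hoff : ∀ i j, i ≠ j → A i j ≤ 0)
    (hadj : ∀ i j : Fin N, (i.val + 1) % N = j.val → A i j < 0 ∧ A j i < 0)
    (hrow : ∀ i, ∑ j, A i j = 0)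
    (w : Fin N → ℝ) (hw : ∀ i, 0 ≤ A.mulVec w i) :
    ∀ i j : Fin N, w i = w j := by
  have hNpos : 0 < N := by omega
  obtain ⟨i0, -, hi0⟩ := Finset.exists_min_image Finset.univ w ⟨⟨0, hNpos⟩, Finset.mem_univ _⟩
  set m := w i0 with hm
  have hmin : ∀ j, m ≤ w j := fun j => hi0 j (Finset.mem_univ j)
  -- one step of propagation
  have step : ∀ i : Fin N, w i = m → w ⟨(i.val + 1) % N, Nat.mod_lt _ hNpos⟩ = m := by
    intro i hi
    set j : Fin N := ⟨(i.val + 1) % N, Nat.mod_lt _ hNpos⟩ with hj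
    have hterm : ∀ k ∈ Finset.univ, A i k * (w k - m) ≤ 0 := by
      intro k _
      rcases eq_or_ne k i with rfl | hk
      · rw [hi]; simp
      · exact mul_nonpos_of_nonpos_of_nonneg (hoff i k (Ne.symm hk)) (by linarith [hmin k])
    have hsum : ∑ k, A i k * (w k - m) = A.mulVec w i := by
      simp only [mul_sub, Finset.sum_sub_distrib, ← Finset.sum_mul, hrow i,
        Matrix.mulVec, dotProduct]
      ring
    have hsum0 : ∑ k, A i k * (w k - m) = 0 :=
      le_antisymm (Finset.sum_nonpos hterm) (hsum ▸ hw i)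
    have hall := (Finset.sum_eq_zero_iff_of_nonpos hterm).mp hsum0 j (Finset.mem_univ j)
    have hAij : A i j < 0 := (hadj i j rfl).1
    have : w j - m = 0 := by
      by_contra hne
      have : w j - m > 0 := lt_of_le_of_ne (by linarith [hmin j]) (Ne.symm hne)
      nlinarith
    linarith
  -- propagate around the cycle
  have all : ∀ k : ℕ, w ⟨(i0.val + k) % N, Nat.mod_lt _ hNpos⟩ = m := by
    intro k
    induction k with
    | zero => simp [Nat.mod_eq_of_lt i0.isLt, hm]
    | succ k ih =>
      have h2 := step _ ih
      have heq : (((i0.val + k) % N) + 1) % N = (i0.val + (k+1)) % N := by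
        conv_rhs => rw [← Nat.add_assoc, Nat.add_mod (i0.val + k) 1]
        have h1 : (1 : ℕ) % N = 1 := Nat.mod_eq_of_lt (by omega)
        rw [h1]
      convert h2 using 3
      exact heq.symm
  have hconst : ∀ j : Fin N, w j = m := by
    intro j
    have := all ((N - i0.val) + j.val)
    have hval : (i0.val + ((N - i0.val) + j.val)) % N = j.val := by
      have h1 : i0.val ≤ N := le_of_lt i0.isLt
      have : i0.val + ((N - i0.val) + j.val) = N + j.val := by omega
      rw [this, Nat.add_comm N j.val, Nat.add_mod_right, Nat.mod_eq_of_lt j.isLt]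
    rw [show j = (⟨(i0.val + ((N - i0.val) + j.val)) % N, Nat.mod_lt _ hNpos⟩ : Fin N) from
      Fin.ext hval.symm]
    exact this
  intro i j; rw [hconst i, hconst j]

/-- Let `A` be an `N×N` real matrix (`N ≥ 2`) with diagonal entries `2`, off-diagonal
entries `≤ 0`, strictly negative entries at the cyclically adjacent positions
(`i − j ≡ ±1 mod N`), and all row sums zero. Then the only vector with all nonnegative
entries in the range of `A` is the zero vector, and the one-dimensional kernel of `Aᵀ`
is spanned by a vector all of whose entries are strictly positive. -/
theorem stmt16 (N : ℕ) (hN : 2 ≤ N) (A : Matrix (Fin N) (Fin N) ℝ)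
    (hdiag : ∀ i, A i i = 2)
    (hoff : ∀ i j, i ≠ j → A i j ≤ 0)
    (hadj : ∀ i j : Fin N, (i.val + 1) % N = j.val → A i j < 0 ∧ A j i < 0)
    (hrow : ∀ i, ∑ j, A i j = 0) :
    (∀ h : Fin N → ℝ, (∀ i, 0 ≤ h i) → (∃ w, A.mulVec w = h) → h = 0) ∧
    (∃ u : Fin N → ℝ, (∀ i, 0 < u i) ∧ A.transpose.mulVec u = 0 ∧
      ∀ w : Fin N → ℝ, A.transpose.mulVec w = 0 → ∃ c : ℝ, w = c • u) := by
  have hNpos : 0 < N := by omega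
  have hconst : ∀ (w : Fin N → ℝ), (∀ i, 0 ≤ A.mulVec w i) → ∀ i j : Fin N, w i = w j :=
    fun w hw => stmt16_const N hN A hoff hadj hrow w hw
  have i₀ : Fin N := ⟨0, hNpos⟩
  -- if w is constant then A.mulVec w = 0
  have hmv0 : ∀ (w : Fin N → ℝ), (∀ i j : Fin N, w i = w j) → A.mulVec w = 0 := by
    intro w hc
    funext i
    have : A.mulVec w i = ∑ j, A i j * w i := by
      simp only [Matrix.mulVec, dotProduct]
      exact Finset.sum_congr rfl fun j _ => by rw [hc j i]
    rw [Pi.zero_apply, this, ← Finset.sum_mul, hrow i, zero_mul]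
  -- Part 1
  have part1 : ∀ h : Fin N → ℝ, (∀ i, 0 ≤ h i) → (∃ w, A.mulVec w = h) → h = 0 := by
    rintro h hh ⟨w, rfl⟩
    exact hmv0 w (hconst w fun i => hh i)
  refine ⟨part1, ?_⟩
  -- the all-ones vector is in the kernel of A
  have hone : A.mulVec (fun _ => (1:ℝ)) = 0 := by
    funext i
    simp [Matrix.mulVec, dotProduct, hrow i]
  have honene : (fun _ => (1:ℝ)) ≠ (0 : Fin N → ℝ) := by
    intro hcontra
    have := congrFun hcontra i₀
    simp at this
  -- det A = 0, so ker Aᵀ is nontrivial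
  have hdet : A.det = 0 :=
    Matrix.exists_mulVec_eq_zero_iff.mp ⟨fun _ => 1, honene, hone⟩
  have hdetT : A.transpose.det = 0 := by rw [Matrix.det_transpose]; exact hdet
  obtain ⟨u0, hu0ne, hu0⟩ := Matrix.exists_mulVec_eq_zero_iff.mpr hdetT
  -- linear algebra setup
  set f : (Fin N → ℝ) →ₗ[ℝ] (Fin N → ℝ) := Matrix.mulVecLin A with hf
  have hkerf : LinearMap.ker f = Submodule.span ℝ {(fun _ => (1:ℝ))} := by
    apply le_antisymm
    · intro w hw
      rw [LinearMap.mem_ker] at hw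
      have hc : ∀ i j : Fin N, w i = w j := by
        apply hconst
        intro i
        rw [show A.mulVec w = 0 from hw]
        simp
      have : w = (w i₀) • (fun _ => (1:ℝ)) := by
        funext j; simp [hc j i₀]
      rw [this]
      exact Submodule.smul_mem _ _ (Submodule.mem_span_singleton_self _)
    · rw [Submodule.span_le, Set.singleton_subset_iff]
      exact hone
  have hfinkerf : Module.finrank ℝ (LinearMap.ker f) = 1 := by
    rw [hkerf]; exact finrank_span_singleton honene
  have hfindom : Module.finrank ℝ (Fin N → ℝ) = N := by
    simp
  have hrangef : Module.finrank ℝ (LinearMap.range f) = N - 1 := by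
    have := LinearMap.finrank_range_add_finrank_ker f
    rw [hfinkerf, hfindom] at this
    omega
  -- membership criterion for the range of A
  have hmem : ∀ v : Fin N → ℝ, A.transpose.mulVec v = 0 → v ≠ 0 →
      ∀ h : Fin N → ℝ, (∑ i, h i * v i = 0) → ∃ w, A.mulVec w = h := by
    intro v hv hvne h hh
    set g : (Fin N → ℝ) →ₗ[ℝ] ℝ :=
      { toFun := fun x => ∑ i, x i * v i
        map_add' := by intro x y; simp [add_mul, Finset.sum_add_distrib]
        map_smul' := by intro c x; simp [Finset.mul_sum, mul_assoc] } with hg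
    have hgsurj : Function.Surjective g := by
      obtain ⟨j, hj⟩ := Function.ne_iff.mp hvne
      intro c
      refine ⟨fun k => if k = j then c / v j else 0, ?_⟩
      show (∑ i, (if i = j then c / v j else 0) * v i) = c
      rw [Finset.sum_eq_single j]
      · rw [if_pos rfl]
        have hj' : v j ≠ 0 := by simpa using hj
        rw [div_mul_cancel₀ c hj']
      · intro b _ hb; rw [if_neg hb, zero_mul]
      · intro hb; exact absurd (Finset.mem_univ j) hb
    have hkerg : Module.finrank ℝ (LinearMap.ker g) = N - 1 := by
      have h1 := LinearMap.finrank_range_add_finrank_ker g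
      rw [hfindom, LinearMap.range_eq_top.mpr hgsurj] at h1
      simp only [finrank_top, Module.finrank_self] at h1
      omega
    have hle : LinearMap.range f ≤ LinearMap.ker g := by
      rintro x ⟨w, rfl⟩
      rw [LinearMap.mem_ker]
      show (∑ i, (A.mulVecLin w) i * v i) = 0
      have : ∀ i, (A.mulVecLin w) i = ∑ j, A i j * w j := by
        intro i; simp [Matrix.mulVecLin, Matrix.mulVec, dotProduct]
      calc ∑ i, (A.mulVecLin w) i * v i
          = ∑ i, ∑ j, A i j * w j * v i := by
            exact Finset.sum_congr rfl fun i _ => by rw [this i, Finset.sum_mul]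
        _ = ∑ j, (∑ i, A i j * v i) * w j := by
            rw [Finset.sum_comm]
            refine Finset.sum_congr rfl fun j _ => ?_
            rw [Finset.sum_mul]
            exact Finset.sum_congr rfl fun i _ => by ring
        _ = 0 := by
            apply Finset.sum_eq_zero
            intro j _
            have : (∑ i, A i j * v i) = A.transpose.mulVec v j := by
              simp [Matrix.mulVec, dotProduct, Matrix.transpose_apply,
                mul_comm]
            rw [this, hv, Pi.zero_apply, zero_mul]
    have heq : LinearMap.range f = LinearMap.ker g :=
      Submodule.eq_of_le_of_finrank_eq hle (by rw [hrangef, hkerg])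
    have : h ∈ LinearMap.range f := by
      rw [heq, LinearMap.mem_ker]; exact hh
    obtain ⟨w, hw⟩ := this
    exact ⟨w, hw⟩
  -- nonzero kernel vectors of Aᵀ have no zero entries
  have nozero : ∀ v : Fin N → ℝ, A.transpose.mulVec v = 0 → v ≠ 0 → ∀ i, v i ≠ 0 := by
    intro v hv hvne i hi
    set h : Fin N → ℝ := fun k => if k = i then 1 else 0 with hh
    have hsum : ∑ k, h k * v k = 0 := by
      rw [Finset.sum_eq_single i]
      · simp [hh, hi]
      · intro b _ hb; simp [hh, hb]
      · intro hb; exact absurd (Finset.mem_univ i) hb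
    have hzero := part1 h (fun k => by simp only [hh]; positivity) (hmem v hv hvne h hsum)
    have := congrFun hzero i
    simp [hh] at this
  -- nonzero kernel vectors of Aᵀ have constant sign
  have signs : ∀ v : Fin N → ℝ, A.transpose.mulVec v = 0 → v ≠ 0 →
      (∀ i, 0 < v i) ∨ (∀ i, v i < 0) := by
    intro v hv hvne
    by_contra hcon
    push_neg at hcon
    obtain ⟨⟨i, hi⟩, ⟨j, hj⟩⟩ := hcon
    have hvi : v i < 0 := lt_of_le_of_ne hi (nozero v hv hvne i)
    have hvj : 0 < v j := lt_of_le_of_ne hj (Ne.symm (nozero v hv hvne j))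
    have hij : i ≠ j := fun hE => by rw [hE] at hvi; linarith
    set h : Fin N → ℝ := fun k => if k = i then v j else if k = j then -v i else 0 with hh
    have hsum : ∑ k, h k * v k = 0 := by
      have hsub : ∀ k ∈ Finset.univ \ ({i, j} : Finset (Fin N)), h k * v k = 0 := by
        intro k hk
        simp only [Finset.mem_sdiff, Finset.mem_insert, Finset.mem_singleton] at hk
        push_neg at hk
        simp [hh, hk.2.1, hk.2.2]
      rw [← Finset.sum_subset (Finset.subset_univ ({i, j} : Finset (Fin N)))
        (fun k _ hk => by
          simp only [Finset.mem_insert, Finset.mem_singleton] at hk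
          push_neg at hk
          simp [hh, hk.1, hk.2])]
      rw [Finset.sum_pair hij]
      simp [hh, hij, Ne.symm hij]
      ring
    have hpos : ∀ k, 0 ≤ h k := by
      intro k
      simp only [hh]
      rcases eq_or_ne k i with rfl | hki
      · rw [if_pos rfl]; linarith
      · rw [if_neg hki]
        rcases eq_or_ne k j with rfl | hkj
        · rw [if_pos rfl]; linarith
        · rw [if_neg hkj]
    have hzero := part1 h hpos (hmem v hv hvne h hsum)
    have hci : v j = 0 := by simpa [hh] using congrFun hzero i
    linarith
  -- finish: choose the positive kernel vector
  have huspan : ∀ u : Fin N → ℝ, (∀ i, 0 < u i) → A.transpose.mulVec u = 0 →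
      ∀ w : Fin N → ℝ, A.transpose.mulVec w = 0 → ∃ c : ℝ, w = c • u := by
    intro u hupos hu w hw
    refine ⟨w i₀ / u i₀, ?_⟩
    by_contra hne
    have hvne : w - (w i₀ / u i₀) • u ≠ 0 := fun hE => hne (by
      have := sub_eq_zero.mp hE; exact this)
    have hvker : A.transpose.mulVec (w - (w i₀ / u i₀) • u) = 0 := by
      rw [Matrix.mulVec_sub, Matrix.mulVec_smul, hw, hu]
      simp
    have := nozero _ hvker hvne i₀
    apply this
    have hui : u i₀ ≠ 0 := ne_of_gt (hupos i₀)
    simp [Pi.sub_apply, Pi.smul_apply, smul_eq_mul]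
    field_simp
    ring
  rcases signs u0 hu0 hu0ne with hpos | hneg
  · exact ⟨u0, hpos, hu0, huspan u0 hpos hu0⟩
  · refine ⟨-u0, fun i => by simpa using neg_pos.mpr (hneg i), ?_, ?_⟩
    · rw [Matrix.mulVec_neg, hu0, neg_zero]
    · exact huspan (-u0) (fun i => by simpa using neg_pos.mpr (hneg i))
        (by rw [Matrix.mulVec_neg, hu0, neg_zero])
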